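/- Let d ≥ 1, let x, y ∈ ℝ^d with x ≠ y, and let S, T ∈ ℝ^{d×d} with T invertible. Suppose ‖S − T‖ ≤ M and ‖T⁻¹‖ ≤ Λ for constants M ≥ 0 and Λ > 0. Set z = x − y, e = z/|z|, u = (T⁻¹z)/|T⁻¹z|, H = I − 2uuᵀ, and α = S − TH. Then |αᵀe| ≥ 2Λ⁻¹ − M. -/

import Mathlib

open scoped Matrix

/-- Action of a `d × d` real matrix on `EuclideanSpace ℝ (Fin d)`. -/
noncomputable def matVec {d : ℕ} (S : Matrix (Fin d) (Fin d) ℝ)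
    (x : EuclideanSpace ℝ (Fin d)) : EuclideanSpace ℝ (Fin d) :=
  Matrix.toEuclideanCLM (𝕜 := ℝ) S x

/-- The operator norm of a `d × d` real matrix induced by the Euclidean norm. -/
noncomputable def matNorm {d : ℕ} (S : Matrix (Fin d) (Fin d) ℝ) : ℝ :=
  ‖Matrix.toEuclideanCLM (𝕜 := ℝ) S‖

set_option synthInstance.maxHeartbeats 400000
set_option maxHeartbeats 1000000
set_option linter.unusedVariables false

lemma matNorm_transpose {d : ℕ} (A : Matrix (Fin d) (Fin d) ℝ) :
    matNorm Aᵀ = matNorm A := by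
  have h : (Matrix.toEuclideanCLM (𝕜 := ℝ) Aᴴ) = star (Matrix.toEuclideanCLM (𝕜 := ℝ) A) :=
    map_star _ A
  rw [matNorm, ← Matrix.conjTranspose_eq_transpose_of_trivial, h,
    ContinuousLinearMap.star_eq_adjoint]
  exact LinearIsometryEquiv.norm_map ContinuousLinearMap.adjoint _

lemma matVec_norm_le {d : ℕ} (A : Matrix (Fin d) (Fin d) ℝ) (v : EuclideanSpace ℝ (Fin d)) :
    ‖matVec A v‖ ≤ matNorm A * ‖v‖ :=
  (Matrix.toEuclideanCLM (𝕜 := ℝ) A).le_opNorm v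

lemma matVec_mul {d : ℕ} (A B : Matrix (Fin d) (Fin d) ℝ) (v : EuclideanSpace ℝ (Fin d)) :
    matVec (A * B) v = matVec A (matVec B v) := by simp [matVec, map_mul]

lemma matVec_add {d : ℕ} (A B : Matrix (Fin d) (Fin d) ℝ) (v : EuclideanSpace ℝ (Fin d)) :
    matVec (A + B) v = matVec A v + matVec B v := by simp [matVec, map_add]

lemma matVec_sub {d : ℕ} (A B : Matrix (Fin d) (Fin d) ℝ) (v : EuclideanSpace ℝ (Fin d)) :
    matVec (A - B) v = matVec A v - matVec B v := by simp [matVec, map_sub]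

lemma matVec_one {d : ℕ} (v : EuclideanSpace ℝ (Fin d)) :
    matVec (1 : Matrix (Fin d) (Fin d) ℝ) v = v := by simp [matVec, map_one]

lemma matVec_smulmat {d : ℕ} (c : ℝ) (A : Matrix (Fin d) (Fin d) ℝ) (v : EuclideanSpace ℝ (Fin d)) :
    matVec (c • A) v = c • matVec A v := by simp [matVec, map_smul]

lemma matVec_smulvec {d : ℕ} (c : ℝ) (A : Matrix (Fin d) (Fin d) ℝ) (v : EuclideanSpace ℝ (Fin d)) :
    matVec A (c • v) = c • matVec A v := by simp [matVec, map_smul]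

lemma matVec_vecMulVec {d : ℕ} (u w : EuclideanSpace ℝ (Fin d)) :
    matVec (Matrix.vecMulVec (fun i => u i) (fun i => u i)) w = (inner ℝ u w : ℝ) • u := by
  ext i
  show (Matrix.vecMulVec (fun i => u i) (fun i => u i)).mulVec (fun j => w j) i = _
  simp only [Matrix.mulVec, dotProduct, Matrix.vecMulVec_apply,
    PiLp.smul_apply, smul_eq_mul]
  rw [real_inner_comm, PiLp.inner_apply]
  simp [Finset.mul_sum, mul_comm, mul_assoc, mul_left_comm, RCLike.inner_apply, conj_trivial]

lemma inner_matVec_transpose {d : ℕ} (A : Matrix (Fin d) (Fin d) ℝ)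
    (u v : EuclideanSpace ℝ (Fin d)) :
    (inner ℝ u (matVec Aᵀ v) : ℝ) = inner ℝ (matVec A u) v := by
  have h : (Matrix.toEuclideanCLM (𝕜 := ℝ) Aᴴ) = star (Matrix.toEuclideanCLM (𝕜 := ℝ) A) :=
    map_star _ A
  rw [matVec, ← Matrix.conjTranspose_eq_transpose_of_trivial, h,
    ContinuousLinearMap.star_eq_adjoint]
  exact ContinuousLinearMap.adjoint_inner_right _ _ _

lemma vecMulVec_symm {d : ℕ} (u : EuclideanSpace ℝ (Fin d)) :
    (Matrix.vecMulVec (fun i => u i) (fun i => u i))ᵀ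
      = Matrix.vecMulVec (fun i => u i) (fun i => u i) := by
  ext i j
  simp [Matrix.vecMulVec_apply, mul_comm]

/-- **Nondegeneracy of the reflection coupling**: if `‖S − T‖ ≤ M` and
`‖T⁻¹‖ ≤ Λ`, then with `z = x − y`, `e = z/|z|`, `u = T⁻¹z/|T⁻¹z|`,
`H = I − 2uuᵀ`, `α = S − TH`, one has `|αᵀe| ≥ 2Λ⁻¹ − M`. -/
theorem reflection_coupling_nondegenerate
    {d : ℕ} (hd : 1 ≤ d) (x y : EuclideanSpace ℝ (Fin d)) (hxy : x ≠ y)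
    (S T : Matrix (Fin d) (Fin d) ℝ) (hT : IsUnit T)
    (M Λ : ℝ) (hM : 0 ≤ M) (hΛ : 0 < Λ)
    (hST : matNorm (S - T) ≤ M) (hTinv : matNorm T⁻¹ ≤ Λ)
    (z e u : EuclideanSpace ℝ (Fin d)) (H α : Matrix (Fin d) (Fin d) ℝ)
    (hz : z = x - y)
    (he : e = ‖z‖⁻¹ • z)
    (hu : u = ‖matVec T⁻¹ z‖⁻¹ • matVec T⁻¹ z)
    (hH : H = 1 - (2 : ℝ) • Matrix.vecMulVec (fun i => u i) (fun i => u i))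
    (hα : α = S - T * H) :
    2 * Λ⁻¹ - M ≤ ‖matVec αᵀ e‖ := by
  have hz0 : z ≠ 0 := by rw [hz]; exact sub_ne_zero.mpr hxy
  have hznorm : (0 : ℝ) < ‖z‖ := norm_pos_iff.mpr hz0
  set w : EuclideanSpace ℝ (Fin d) := matVec T⁻¹ z with hw
  have hdet : IsUnit T.det := (Matrix.isUnit_iff_isUnit_det T).mp hT
  have hTT : T * T⁻¹ = 1 := Matrix.mul_nonsing_inv T hdet
  have hTw : matVec T w = z := by
    rw [hw, ← matVec_mul, hTT, matVec_one]
  have hw0 : w ≠ 0 := by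
    intro h
    apply hz0
    rw [← hTw, h, matVec]
    simp
  have hwnorm : (0 : ℝ) < ‖w‖ := norm_pos_iff.mpr hw0
  have hwle : ‖w‖ ≤ Λ * ‖z‖ := by
    calc ‖w‖ ≤ matNorm T⁻¹ * ‖z‖ := matVec_norm_le _ _
    _ ≤ Λ * ‖z‖ := by gcongr
  -- norms of e, u
  have hunorm : ‖u‖ = 1 := by
    rw [hu, norm_smul, norm_inv, norm_norm, inv_mul_cancel₀ (ne_of_gt hwnorm)]
  -- the key scalar
  set c : ℝ := ‖w‖⁻¹ * ‖z‖ with hc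
  have hcpos : 0 < c := mul_pos (inv_pos.mpr hwnorm) hznorm
  have hcge : Λ⁻¹ ≤ c := by
    rw [hc, inv_mul_eq_div, le_div_iff₀ hwnorm]
    calc Λ⁻¹ * ‖w‖ ≤ Λ⁻¹ * (Λ * ‖z‖) := by gcongr
    _ = ‖z‖ := by field_simp
  have hTu : matVec T u = ‖w‖⁻¹ • z := by
    rw [hu, matVec_smulvec, hTw]
  have hinner : (inner ℝ (matVec T u) e : ℝ) = c := by
    rw [hTu, he, real_inner_smul_left, real_inner_smul_right, real_inner_self_eq_norm_sq]
    rw [hc]; field_simp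
  have henorm : ‖e‖ = 1 := by
    rw [he, norm_smul, norm_inv, norm_norm, inv_mul_cancel₀ (ne_of_gt hznorm)]
  -- decomposition of αᵀ e
  set P : Matrix (Fin d) (Fin d) ℝ := Matrix.vecMulVec (fun i => u i) (fun i => u i) with hP
  have hα' : α = (S - T) + (2:ℝ) • (T * P) := by
    rw [hα, hH, Matrix.mul_sub, Matrix.mul_one, Matrix.mul_smul]
    abel
  have hαT : αᵀ = (S - T)ᵀ + (2:ℝ) • (P * Tᵀ) := by
    rw [hα', Matrix.transpose_add, Matrix.transpose_smul, Matrix.transpose_mul, hP,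
      vecMulVec_symm]
  set v : EuclideanSpace ℝ (Fin d) := matVec (S - T)ᵀ e with hv
  have hdecomp : matVec αᵀ e = v + (2 * c) • u := by
    rw [hαT, matVec_add, matVec_smulmat, matVec_mul, hP, matVec_vecMulVec,
      inner_matVec_transpose, hinner, hv, smul_smul]
  have hvle : ‖v‖ ≤ M := by
    calc ‖v‖ ≤ matNorm (S - T)ᵀ * ‖e‖ := matVec_norm_le _ _
    _ = matNorm (S - T) := by rw [matNorm_transpose, henorm, mul_one]
    _ ≤ M := hST
  have hnormcu : ‖(2 * c) • u‖ = 2 * c := by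
    rw [norm_smul, hunorm, mul_one, Real.norm_eq_abs, abs_of_pos (by linarith)]
  have htri : ‖(2 * c) • u‖ - ‖v‖ ≤ ‖v + (2 * c) • u‖ := by
    have h1 : ‖(2 * c) • u‖ ≤ ‖v + (2 * c) • u‖ + ‖v‖ := by
      calc ‖(2 * c) • u‖ = ‖(v + (2 * c) • u) - v‖ := by rw [add_sub_cancel_left]
      _ ≤ ‖v + (2 * c) • u‖ + ‖v‖ := norm_sub_le _ _
    linarith
  rw [hdecomp]
  rw [hnormcu] at htri
  linarith
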